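/- Andréief's integration formula: for integrable functions ψ_1,...,ψ_N and φ_1,...,φ_N on an interval I ⊆ ℝ, ∏_{n=1}^N ∫_I dx_n of det[ψ_l(x_k)]_{k,l=1}^N · det[φ_l(x_k)]_{k,l=1}^N equals N! · det[∫_I ψ_k(x) φ_l(x) dx]_{k,l=1}^N. -/

import Mathlib

open MeasureTheory

lemma det_eq' {N : ℕ} (M : Matrix (Fin N) (Fin N) ℂ) :
    M.det = ∑ σ : Equiv.Perm (Fin N), ((Equiv.Perm.sign σ : ℤ) : ℂ) * ∏ i, M i (σ i) := by
  rw [← Matrix.det_transpose, Matrix.det_apply']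
  rfl

lemma sum_perm_det {N : ℕ} (A : Matrix (Fin N) (Fin N) ℂ) :
    ∑ σ : Equiv.Perm (Fin N), ∑ τ : Equiv.Perm (Fin N),
      ((Equiv.Perm.sign σ : ℤ) : ℂ) * ((Equiv.Perm.sign τ : ℤ) : ℂ) * ∏ k, A (σ k) (τ k)
    = (N.factorial : ℂ) * A.det := by
  have h : ∀ σ : Equiv.Perm (Fin N),
      (∑ τ : Equiv.Perm (Fin N),
        ((Equiv.Perm.sign σ : ℤ) : ℂ) * ((Equiv.Perm.sign τ : ℤ) : ℂ) * ∏ k, A (σ k) (τ k))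
      = A.det := by
    intro σ
    rw [det_eq']
    rw [← Equiv.sum_comp (Equiv.mulRight σ)
      (fun τ => ((Equiv.Perm.sign σ : ℤ) : ℂ) * ((Equiv.Perm.sign τ : ℤ) : ℂ) * ∏ k, A (σ k) (τ k))]
    refine Finset.sum_congr rfl fun π _ => ?_
    have h1 : ∀ k, (Equiv.mulRight σ π) k = π (σ k) := fun k => rfl
    have h2 : ∏ k, A (σ k) ((Equiv.mulRight σ π) k) = ∏ j, A j (π j) := by
      simp only [h1]
      exact Equiv.prod_comp σ (fun j => A j (π j))
    rw [h2]
    have h3 : ((Equiv.Perm.sign (Equiv.mulRight σ π) : ℤ) : ℂ) =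
        ((Equiv.Perm.sign π : ℤ) : ℂ) * ((Equiv.Perm.sign σ : ℤ) : ℂ) := by
      have : Equiv.mulRight σ π = π * σ := rfl
      rw [this, Equiv.Perm.sign_mul]
      push_cast
      ring
    rw [h3]
    have h4 : ((Equiv.Perm.sign σ : ℤ) : ℂ) * ((Equiv.Perm.sign σ : ℤ) : ℂ) = 1 := by
      have h := Int.units_mul_self (Equiv.Perm.sign σ)
      have h' : ((Equiv.Perm.sign σ : ℤ) * (Equiv.Perm.sign σ : ℤ)) = 1 := by
        rw [← Units.val_mul, h]; rfl
      calc ((Equiv.Perm.sign σ : ℤ) : ℂ) * ((Equiv.Perm.sign σ : ℤ) : ℂ)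
          = (((Equiv.Perm.sign σ : ℤ) * (Equiv.Perm.sign σ : ℤ) : ℤ) : ℂ) := by push_cast; ring
        _ = 1 := by rw [h']; norm_num
    calc ((Equiv.Perm.sign σ : ℤ) : ℂ) *
          (((Equiv.Perm.sign π : ℤ) : ℂ) * ((Equiv.Perm.sign σ : ℤ) : ℂ)) * ∏ j, A j (π j)
        = (((Equiv.Perm.sign σ : ℤ) : ℂ) * ((Equiv.Perm.sign σ : ℤ) : ℂ)) *
            (((Equiv.Perm.sign π : ℤ) : ℂ) * ∏ j, A j (π j)) := by ring
      _ = ((Equiv.Perm.sign π : ℤ) : ℂ) * ∏ j, A j (π j) := by rw [h4, one_mul]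
  rw [Finset.sum_congr rfl fun σ _ => h σ, Finset.sum_const, Finset.card_univ,
    Fintype.card_perm, Fintype.card_fin, nsmul_eq_mul]

lemma pi_prod_integrable {N : ℕ} (μ : Measure ℝ) [SigmaFinite μ] (f : Fin N → ℝ → ℂ)
    (hf : ∀ i, Integrable (f i) μ) :
    Integrable (fun x : Fin N → ℝ => ∏ i, f i (x i)) (Measure.pi fun _ => μ) := by
  letI : MeasureSpace ℝ := ⟨μ⟩
  haveI : SigmaFinite (volume : Measure ℝ) := ‹SigmaFinite μ›
  exact Integrable.fintype_prod hf

lemma pi_prod_integral {N : ℕ} (μ : Measure ℝ) [SigmaFinite μ] (f : Fin N → ℝ → ℂ) :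
    ∫ x : Fin N → ℝ, ∏ i, f i (x i) ∂(Measure.pi fun _ => μ) = ∏ i, ∫ t, f i t ∂μ := by
  letI : MeasureSpace ℝ := ⟨μ⟩
  haveI : SigmaFinite (volume : Measure ℝ) := ‹SigmaFinite μ›
  exact integral_fintype_prod_eq_prod f

/-- Andréief's integration formula. For measurable functions
`ψ 1, ..., ψ N` and `φ 1, ..., φ N` on a measurable set `I ⊆ ℝ` such that all products
`ψ k · φ l` are integrable on `I` and the full integrand is integrable on `I^N`,
`∫_{I^N} det[ψ l (x k)] · det[φ l (x k)] dx = N! · det[∫_I ψ k φ l]`. -/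
theorem andreief_formula (N : ℕ) (I : Set ℝ) (hI : MeasurableSet I)
    (ψ φ : Fin N → ℝ → ℂ)
    (hψ : ∀ k, Measurable (ψ k)) (hφ : ∀ k, Measurable (φ k))
    (hint : ∀ k l, IntegrableOn (fun t => ψ k t * φ l t) I)
    (hint2 : Integrable
      (fun x : Fin N → ℝ =>
        Matrix.det (Matrix.of fun k l => ψ l (x k)) *
          Matrix.det (Matrix.of fun k l => φ l (x k)))
      (Measure.pi fun _ => volume.restrict I)) :
    (∫ x : Fin N → ℝ,
        Matrix.det (Matrix.of fun k l => ψ l (x k)) *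
          Matrix.det (Matrix.of fun k l => φ l (x k))
        ∂(Measure.pi fun _ => volume.restrict I))
      = (N.factorial : ℂ) *
          Matrix.det (Matrix.of fun k l : Fin N => ∫ t in I, ψ k t * φ l t) := by
  set μ := volume.restrict I with hμ
  have hdet : ∀ x : Fin N → ℝ,
      Matrix.det (Matrix.of fun k l => ψ l (x k)) *
        Matrix.det (Matrix.of fun k l => φ l (x k))
      = ∑ σ : Equiv.Perm (Fin N), ∑ τ : Equiv.Perm (Fin N),
          ((Equiv.Perm.sign σ : ℤ) : ℂ) * ((Equiv.Perm.sign τ : ℤ) : ℂ) *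
            ∏ k, (ψ (σ k) (x k) * φ (τ k) (x k)) := by
    intro x
    rw [det_eq', det_eq', Finset.sum_mul_sum]
    refine Finset.sum_congr rfl fun σ _ => Finset.sum_congr rfl fun τ _ => ?_
    rw [Finset.prod_mul_distrib]
    show (_ * ∏ k, ψ (σ k) (x k)) * (_ * ∏ k, φ (τ k) (x k)) = _
    ring
  have hterm : ∀ (σ τ : Equiv.Perm (Fin N)),
      Integrable (fun x : Fin N → ℝ =>
        ((Equiv.Perm.sign σ : ℤ) : ℂ) * ((Equiv.Perm.sign τ : ℤ) : ℂ) *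
          ∏ k, (ψ (σ k) (x k) * φ (τ k) (x k))) (Measure.pi fun _ => μ) := fun σ τ =>
    (pi_prod_integrable μ (fun k t => ψ (σ k) t * φ (τ k) t)
      (fun k => hint (σ k) (τ k))).const_mul _
  calc (∫ x : Fin N → ℝ,
        Matrix.det (Matrix.of fun k l => ψ l (x k)) *
          Matrix.det (Matrix.of fun k l => φ l (x k)) ∂(Measure.pi fun _ => μ))
      = ∫ x : Fin N → ℝ, (∑ σ : Equiv.Perm (Fin N), ∑ τ : Equiv.Perm (Fin N),
          ((Equiv.Perm.sign σ : ℤ) : ℂ) * ((Equiv.Perm.sign τ : ℤ) : ℂ) *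
            ∏ k, (ψ (σ k) (x k) * φ (τ k) (x k))) ∂(Measure.pi fun _ => μ) := by
        exact integral_congr_ae (Filter.Eventually.of_forall hdet)
    _ = ∑ σ : Equiv.Perm (Fin N), ∑ τ : Equiv.Perm (Fin N),
          ∫ x : Fin N → ℝ, ((Equiv.Perm.sign σ : ℤ) : ℂ) * ((Equiv.Perm.sign τ : ℤ) : ℂ) *
            ∏ k, (ψ (σ k) (x k) * φ (τ k) (x k)) ∂(Measure.pi fun _ => μ) := by
        rw [integral_finset_sum _ fun σ _ => integrable_finset_sum _ fun τ _ => hterm σ τ]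
        exact Finset.sum_congr rfl fun σ _ =>
          integral_finset_sum _ fun τ _ => hterm σ τ
    _ = ∑ σ : Equiv.Perm (Fin N), ∑ τ : Equiv.Perm (Fin N),
          ((Equiv.Perm.sign σ : ℤ) : ℂ) * ((Equiv.Perm.sign τ : ℤ) : ℂ) *
            ∏ k, (Matrix.of fun k l : Fin N => ∫ t in I, ψ k t * φ l t) (σ k) (τ k) := by
        refine Finset.sum_congr rfl fun σ _ => Finset.sum_congr rfl fun τ _ => ?_
        rw [integral_const_mul, pi_prod_integral μ (fun k t => ψ (σ k) t * φ (τ k) t)]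
        rfl
    _ = (N.factorial : ℂ) *
          Matrix.det (Matrix.of fun k l : Fin N => ∫ t in I, ψ k t * φ l t) :=
        sum_perm_det _
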